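/- Let 1 ≤ k ≤ n. The complementation map γ sending I to {[n] \ X : X ∈ I} is a bijection from C(n,k) to C*(n,n−k), and for all I, J ∈ C(n,k) one has I ≤ J in the single step inclusion order on C(n,k) if and only if γ(I) ≤ γ(J) in the single step inclusion order on C*(n,n−k); that is, γ is a poset isomorphism. -/

import Mathlib

open Finset

/-- The `k`-element subsets of `[n] = {1, …, n}`. -/
def ksubsets (n k : ℕ) : Finset (Finset ℕ) := (Finset.Icc 1 n).powersetCard k

/-- The packet of `X`: all subsets of `X` with one element removed. -/
def packet (X : Finset ℕ) : Finset (Finset ℕ) := X.image (fun x => X.erase x)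

/-- The copacket of `X` with respect to `[n]`: all sets `X ∪ {i}` for `i ∈ [n] \ X`. -/
def copacket (n : ℕ) (X : Finset ℕ) : Finset (Finset ℕ) :=
  ((Finset.Icc 1 n) \ X).image (fun i => insert i X)

/-- The lexicographic order on finite sets of naturals viewed as increasing lists:
`X < Y` iff there is `m ∈ X \ Y` below which `X` and `Y` agree. -/
def lexLt (X Y : Finset ℕ) : Prop :=
  ∃ m ∈ X, m ∉ Y ∧ ∀ a < m, (a ∈ X ↔ a ∈ Y)

/-- `r` is a strict linear order on the collection `D`. -/
def IsStrictOrdOn (D : Finset (Finset ℕ)) (r : Finset ℕ → Finset ℕ → Prop) : Prop :=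
  (∀ X ∈ D, ¬ r X X) ∧
  (∀ X ∈ D, ∀ Y ∈ D, ∀ Z ∈ D, r X Y → r Y Z → r X Z) ∧
  (∀ X ∈ D, ∀ Y ∈ D, X ≠ Y → r X Y ∨ r Y X)

/-- The restriction of `r` to `P` is the lex order. -/
def RestrLex (r : Finset ℕ → Finset ℕ → Prop) (P : Finset (Finset ℕ)) : Prop :=
  ∀ A ∈ P, ∀ B ∈ P, (r A B ↔ lexLt A B)

/-- The restriction of `r` to `P` is the antilex order. -/
def RestrAntilex (r : Finset ℕ → Finset ℕ → Prop) (P : Finset (Finset ℕ)) : Prop :=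
  ∀ A ∈ P, ∀ B ∈ P, (r A B ↔ lexLt B A)

/-- `r` is an admissible order on the `k`-element subsets of `[n]`. -/
def Admissible (n k : ℕ) (r : Finset ℕ → Finset ℕ → Prop) : Prop :=
  IsStrictOrdOn (ksubsets n k) r ∧
  ∀ X ∈ ksubsets n (k+1), RestrLex r (packet X) ∨ RestrAntilex r (packet X)

/-- `r` is a coadmissible order on the `k`-element subsets of `[n]`. -/
def Coadmissible (n k : ℕ) (r : Finset ℕ → Finset ℕ → Prop) : Prop :=
  IsStrictOrdOn (ksubsets n k) r ∧
  ∀ X ∈ ksubsets n (k-1), RestrLex r (copacket n X) ∨ RestrAntilex r (copacket n X)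

open scoped Classical in
/-- The reversal set of an order on the `k`-element subsets of `[n]`:
the `(k+1)`-element subsets whose packet is restricted to the antilex order. -/
noncomputable def Rev (n k : ℕ) (r : Finset ℕ → Finset ℕ → Prop) : Finset (Finset ℕ) :=
  (ksubsets n (k+1)).filter (fun X => RestrAntilex r (packet X))

open scoped Classical in
/-- The coreversal set of an order on the `k`-element subsets of `[n]`:
the `(k-1)`-element subsets whose copacket is restricted to the antilex order. -/
noncomputable def Corev (n k : ℕ) (r : Finset ℕ → Finset ℕ → Prop) : Finset (Finset ℕ) :=
  (ksubsets n (k-1)).filter (fun X => RestrAntilex r (copacket n X))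

/-- `P ∩ I` is a prefix (lower set) of `P` in lex order. -/
def IsLexPrefix (P I : Finset (Finset ℕ)) : Prop :=
  ∀ A ∈ P, ∀ B ∈ P, B ∈ I → lexLt A B → A ∈ I

/-- `P ∩ I` is a suffix (upper set) of `P` in lex order. -/
def IsLexSuffix (P I : Finset (Finset ℕ)) : Prop :=
  ∀ A ∈ P, ∀ B ∈ P, A ∈ I → lexLt A B → B ∈ I

/-- `I` is a consistent subset of the `k`-element subsets of `[n]`. -/
def Consistent (n k : ℕ) (I : Finset (Finset ℕ)) : Prop :=
  I ⊆ ksubsets n k ∧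
  ∀ X ∈ ksubsets n (k+1), IsLexPrefix (packet X) I ∨ IsLexSuffix (packet X) I

/-- `I` is a coconsistent subset of the `k`-element subsets of `[n]`. -/
def CoConsistent (n k : ℕ) (I : Finset (Finset ℕ)) : Prop :=
  I ⊆ ksubsets n k ∧
  ∀ X ∈ ksubsets n (k-1), IsLexPrefix (copacket n X) I ∨ IsLexSuffix (copacket n X) I

/-- Deletion `I \ n` of a set of subsets. -/
def del (I : Finset (Finset ℕ)) (n : ℕ) : Finset (Finset ℕ) := I.filter (fun X => n ∉ X)

/-- Contraction `I / n` of a set of subsets. -/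
def contr (I : Finset (Finset ℕ)) (n : ℕ) : Finset (Finset ℕ) :=
  (I.filter (fun X => n ∈ X)).image (fun X => X.erase n)

/-- Contraction `ρ / n` of a linear order: `X < Y` iff `X ∪ {n} < Y ∪ {n}` in `ρ`. -/
def contrOrd (r : Finset ℕ → Finset ℕ → Prop) (n : ℕ) : Finset ℕ → Finset ℕ → Prop :=
  fun X Y => r (insert n X) (insert n Y)

/-- The Gale order: componentwise comparison of the increasing enumerations. -/
def galeLe (A B : Finset ℕ) : Prop :=
  List.Forall₂ (· ≤ ·) (A.sort (· ≤ ·)) (B.sort (· ≤ ·))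

/-- The consistent poset relation `≺_I` on the `(k-1)`-element subsets of `[n]`:
within the packet of `X ∈ I` the antilex order, and within the packet of
`X ∉ I` the lex order, transitively closed. -/
def cpRel (n k : ℕ) (I : Finset (Finset ℕ)) : Finset ℕ → Finset ℕ → Prop :=
  Relation.TransGen (fun A B =>
    ∃ X ∈ ksubsets n k, A ∈ packet X ∧ B ∈ packet X ∧
      ((X ∈ I ∧ lexLt B A) ∨ (X ∉ I ∧ lexLt A B)))

/-- A single-step-inclusion cover within the collection `C`. -/
def SSIStep (C : Finset (Finset ℕ) → Prop) (A B : Finset (Finset ℕ)) : Prop :=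
  C A ∧ C B ∧ ∃ Y, Y ∉ A ∧ B = insert Y A

/-- The single step inclusion order on the collection `C`. -/
def SSILe (C : Finset (Finset ℕ) → Prop) : Finset (Finset ℕ) → Finset (Finset ℕ) → Prop :=
  Relation.ReflTransGen (SSIStep C)

/-! ### Auxiliary lemmas for complementation -/

/-- Complementation within `[n]`. -/
def cmpl (n : ℕ) (X : Finset ℕ) : Finset ℕ := Finset.Icc 1 n \ X

lemma mem_ksubsets {n k : ℕ} {X : Finset ℕ} :
    X ∈ ksubsets n k ↔ X ⊆ Finset.Icc 1 n ∧ X.card = k := by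
  simp [ksubsets, Finset.mem_powersetCard]

lemma cmpl_cmpl {n : ℕ} {X : Finset ℕ} (h : X ⊆ Finset.Icc 1 n) :
    cmpl n (cmpl n X) = X := by
  simp only [cmpl, Finset.sdiff_sdiff_self_left]
  exact Finset.inter_eq_right.mpr h

lemma cmpl_mem {n k : ℕ} {X : Finset ℕ} (h : X ∈ ksubsets n k) :
    cmpl n X ∈ ksubsets n (n - k) := by
  rw [mem_ksubsets] at h ⊢
  refine ⟨Finset.sdiff_subset, ?_⟩
  rw [cmpl, Finset.card_sdiff_of_subset h.1, h.2, Nat.card_Icc]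
  omega

lemma lexLt_cmpl {n : ℕ} {A B : Finset ℕ} (hA : A ⊆ Finset.Icc 1 n)
    (h : lexLt A B) : lexLt (cmpl n B) (cmpl n A) := by
  obtain ⟨m, hmA, hmB, hag⟩ := h
  exact ⟨m, by simp [cmpl, hmB, hA hmA], by simp [cmpl, hmA],
    fun a ha => by simp [cmpl, hag a ha]⟩

lemma copacket_to_packet {n : ℕ} {X A : Finset ℕ} (hX : X ⊆ Finset.Icc 1 n)
    (h : A ∈ copacket n X) :
    A ⊆ Finset.Icc 1 n ∧ cmpl n A ∈ packet (cmpl n X) := by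
  simp only [copacket, Finset.mem_image, Finset.mem_sdiff] at h
  obtain ⟨i, ⟨hi, hiX⟩, rfl⟩ := h
  refine ⟨Finset.insert_subset hi hX, ?_⟩
  have hAc : cmpl n (insert i X) = (cmpl n X).erase i := by
    ext a
    simp only [cmpl, Finset.mem_sdiff, Finset.mem_insert, Finset.mem_erase]
    tauto
  rw [hAc]
  simp only [packet, Finset.mem_image]
  exact ⟨i, by simp [cmpl, hi, hiX], rfl⟩

lemma packet_to_copacket {n : ℕ} {X A : Finset ℕ} (hX : X ⊆ Finset.Icc 1 n)
    (h : A ∈ packet X) :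
    A ⊆ Finset.Icc 1 n ∧ cmpl n A ∈ copacket n (cmpl n X) := by
  simp only [packet, Finset.mem_image] at h
  obtain ⟨x, hx, rfl⟩ := h
  refine ⟨(Finset.erase_subset _ _).trans hX, ?_⟩
  have hAc : cmpl n (X.erase x) = insert x (cmpl n X) := by
    ext a
    simp only [cmpl, Finset.mem_sdiff, Finset.mem_erase, Finset.mem_insert]
    constructor
    · rintro ⟨ha, hne⟩
      by_cases hax : a = x
      · exact Or.inl hax
      · exact Or.inr ⟨ha, fun h' => hne ⟨hax, h'⟩⟩
    · rintro (rfl | ⟨ha, hna⟩)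
      · exact ⟨hX hx, fun h' => h'.1 rfl⟩
      · exact ⟨ha, fun h' => hna h'.2⟩
  rw [hAc]
  simp only [copacket, Finset.mem_image, Finset.mem_sdiff]
  exact ⟨x, ⟨hX hx, by simp [cmpl, hx]⟩, rfl⟩

lemma image_cmpl_cmpl {n k : ℕ} {I : Finset (Finset ℕ)} (hI : I ⊆ ksubsets n k) :
    (I.image (cmpl n)).image (cmpl n) = I := by
  ext X
  simp only [Finset.mem_image]
  constructor
  · rintro ⟨Y, ⟨Z, hZ, rfl⟩, rfl⟩
    rwa [cmpl_cmpl (mem_ksubsets.mp (hI hZ)).1]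
  · intro hX
    exact ⟨cmpl n X, ⟨X, hX, rfl⟩, cmpl_cmpl (mem_ksubsets.mp (hI hX)).1⟩

lemma coconsistent_of_consistent {n k : ℕ} (hkn : k ≤ n) {I : Finset (Finset ℕ)}
    (hI : Consistent n k I) :
    CoConsistent n (n - k) (I.image (cmpl n)) := by
  obtain ⟨hIsub, hIpk⟩ := hI
  have hmem : ∀ X ∈ I, X ⊆ Finset.Icc 1 n := fun X hX => (mem_ksubsets.mp (hIsub hX)).1
  constructor
  · intro B hB
    simp only [Finset.mem_image] at hB
    obtain ⟨X, hX, rfl⟩ := hB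
    exact cmpl_mem (hIsub hX)
  · intro X hX
    rcases Nat.eq_or_lt_of_le hkn with heq | hlt
    · -- k = n : vacuous, every member of the image is empty
      left
      intro A hA B hB hBI hlex
      exfalso
      simp only [Finset.mem_image] at hBI
      obtain ⟨B', hB', rfl⟩ := hBI
      have hc : cmpl n B' = ∅ := by
        have h1 := (mem_ksubsets.mp (cmpl_mem (hIsub hB'))).2
        rw [heq, Nat.sub_self] at h1
        exact Finset.card_eq_zero.mp h1
      simp only [copacket, Finset.mem_image, Finset.mem_sdiff] at hB
      obtain ⟨i, _, hBeq⟩ := hB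
      exact Finset.insert_ne_empty i X (hBeq.trans hc)
    · have hXsub : X ⊆ Finset.Icc 1 n := (mem_ksubsets.mp hX).1
      have hXc : cmpl n X ∈ ksubsets n (k + 1) := by
        rw [mem_ksubsets] at hX ⊢
        refine ⟨Finset.sdiff_subset, ?_⟩
        rw [cmpl, Finset.card_sdiff_of_subset hX.1, hX.2, Nat.card_Icc]
        omega
      rcases hIpk (cmpl n X) hXc with hpre | hsuf
      · right
        intro A hA B hB hAI hlex
        obtain ⟨hAsub, hAc⟩ := copacket_to_packet hXsub hA
        obtain ⟨hBsub, hBc⟩ := copacket_to_packet hXsub hB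
        simp only [Finset.mem_image] at hAI ⊢
        obtain ⟨A', hA', rfl⟩ := hAI
        have hA'e : cmpl n (cmpl n A') = A' := cmpl_cmpl (hmem A' hA')
        have hlex' := lexLt_cmpl hAsub hlex
        rw [hA'e] at hlex' hAc
        exact ⟨cmpl n B, hpre _ hBc _ hAc hA' hlex', cmpl_cmpl hBsub⟩
      · left
        intro A hA B hB hBI hlex
        obtain ⟨hAsub, hAc⟩ := copacket_to_packet hXsub hA
        obtain ⟨hBsub, hBc⟩ := copacket_to_packet hXsub hB
        simp only [Finset.mem_image] at hBI ⊢
        obtain ⟨B', hB', rfl⟩ := hBI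
        have hB'e : cmpl n (cmpl n B') = B' := cmpl_cmpl (hmem B' hB')
        have hlex' := lexLt_cmpl hAsub hlex
        rw [hB'e] at hlex' hBc
        exact ⟨cmpl n A, hsuf _ hBc _ hAc hB' hlex', cmpl_cmpl hAsub⟩

lemma consistent_of_coconsistent {n k : ℕ} (hkn : k ≤ n) {J : Finset (Finset ℕ)}
    (hJ : CoConsistent n (n - k) J) :
    Consistent n k (J.image (cmpl n)) := by
  obtain ⟨hJsub, hJpk⟩ := hJ
  have hmem : ∀ X ∈ J, X ⊆ Finset.Icc 1 n := fun X hX => (mem_ksubsets.mp (hJsub hX)).1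
  constructor
  · intro B hB
    simp only [Finset.mem_image] at hB
    obtain ⟨X, hX, rfl⟩ := hB
    have := cmpl_mem (hJsub hX)
    rwa [Nat.sub_sub_self hkn] at this
  · intro X hX
    have hXsub : X ⊆ Finset.Icc 1 n := (mem_ksubsets.mp hX).1
    have hXc : cmpl n X ∈ ksubsets n (n - k - 1) := by
      rw [mem_ksubsets] at hX ⊢
      refine ⟨Finset.sdiff_subset, ?_⟩
      rw [cmpl, Finset.card_sdiff_of_subset hX.1, hX.2, Nat.card_Icc]
      omega
    rcases hJpk (cmpl n X) hXc with hpre | hsuf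
    · right
      intro A hA B hB hAI hlex
      obtain ⟨hAsub, hAc⟩ := packet_to_copacket hXsub hA
      obtain ⟨hBsub, hBc⟩ := packet_to_copacket hXsub hB
      simp only [Finset.mem_image] at hAI ⊢
      obtain ⟨A', hA', rfl⟩ := hAI
      have hA'e : cmpl n (cmpl n A') = A' := cmpl_cmpl (hmem A' hA')
      have hlex' := lexLt_cmpl hAsub hlex
      rw [hA'e] at hlex' hAc
      exact ⟨cmpl n B, hpre _ hBc _ hAc hA' hlex', cmpl_cmpl hBsub⟩
    · left
      intro A hA B hB hBI hlex
      obtain ⟨hAsub, hAc⟩ := packet_to_copacket hXsub hA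
      obtain ⟨hBsub, hBc⟩ := packet_to_copacket hXsub hB
      simp only [Finset.mem_image] at hBI ⊢
      obtain ⟨B', hB', rfl⟩ := hBI
      have hB'e : cmpl n (cmpl n B') = B' := cmpl_cmpl (hmem B' hB')
      have hlex' := lexLt_cmpl hAsub hlex
      rw [hB'e] at hlex' hBc
      exact ⟨cmpl n A, hsuf _ hBc _ hAc hB' hlex', cmpl_cmpl hAsub⟩

lemma ssistep_cmpl {n k : ℕ} (hkn : k ≤ n) {A B : Finset (Finset ℕ)}
    (h : SSIStep (Consistent n k) A B) :
    SSIStep (CoConsistent n (n - k)) (A.image (cmpl n)) (B.image (cmpl n)) := by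
  obtain ⟨hA, hB, Y, hY, rfl⟩ := h
  refine ⟨coconsistent_of_consistent hkn hA, coconsistent_of_consistent hkn hB,
    cmpl n Y, ?_, by rw [Finset.image_insert]⟩
  intro hmemY
  simp only [Finset.mem_image] at hmemY
  obtain ⟨A', hA', heq⟩ := hmemY
  have hYsub : Y ⊆ Finset.Icc 1 n :=
    (mem_ksubsets.mp (hB.1 (Finset.mem_insert_self Y A))).1
  have hA'sub : A' ⊆ Finset.Icc 1 n := (mem_ksubsets.mp (hA.1 hA')).1
  have hAY : A' = Y := by
    have := congrArg (cmpl n) heq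
    rwa [cmpl_cmpl hA'sub, cmpl_cmpl hYsub] at this
  exact hY (hAY ▸ hA')

lemma ssistep_cmpl' {n k : ℕ} (hkn : k ≤ n) {A B : Finset (Finset ℕ)}
    (h : SSIStep (CoConsistent n (n - k)) A B) :
    SSIStep (Consistent n k) (A.image (cmpl n)) (B.image (cmpl n)) := by
  obtain ⟨hA, hB, Y, hY, rfl⟩ := h
  refine ⟨consistent_of_coconsistent hkn hA, consistent_of_coconsistent hkn hB,
    cmpl n Y, ?_, by rw [Finset.image_insert]⟩
  intro hmemY
  simp only [Finset.mem_image] at hmemY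
  obtain ⟨A', hA', heq⟩ := hmemY
  have hYsub : Y ⊆ Finset.Icc 1 n :=
    (mem_ksubsets.mp (hB.1 (Finset.mem_insert_self Y A))).1
  have hA'sub : A' ⊆ Finset.Icc 1 n := (mem_ksubsets.mp (hA.1 hA')).1
  have hAY : A' = Y := by
    have := congrArg (cmpl n) heq
    rwa [cmpl_cmpl hA'sub, cmpl_cmpl hYsub] at this
  exact hY (hAY ▸ hA')

/-- Complementation `I ↦ {[n] \ X : X ∈ I}` is a bijection from the
consistent subsets of `k`-element subsets of `[n]` onto the coconsistent subsets of
`(n-k)`-element subsets of `[n]`, and it is a poset isomorphism for the respective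
single step inclusion orders. -/
theorem complementation_poset_isomorphism (n k : ℕ) (hk : 1 ≤ k) (hkn : k ≤ n) :
    (∀ I, Consistent n k I →
        CoConsistent n (n - k) (I.image (fun X => Finset.Icc 1 n \ X))) ∧
    (∀ I J, Consistent n k I → Consistent n k J →
        I.image (fun X => Finset.Icc 1 n \ X) = J.image (fun X => Finset.Icc 1 n \ X) →
        I = J) ∧
    (∀ J, CoConsistent n (n - k) J →
        ∃ I, Consistent n k I ∧ I.image (fun X => Finset.Icc 1 n \ X) = J) ∧
    (∀ I J, Consistent n k I → Consistent n k J →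
        (SSILe (Consistent n k) I J ↔
          SSILe (CoConsistent n (n - k))
            (I.image (fun X => Finset.Icc 1 n \ X))
            (J.image (fun X => Finset.Icc 1 n \ X)))) := by
  have hfun : (fun X => Finset.Icc 1 n \ X) = cmpl n := rfl
  rw [hfun]
  refine ⟨fun I hI => coconsistent_of_consistent hkn hI,
    fun I J hI hJ h => ?_, fun J hJ => ?_, fun I J hI hJ => ?_⟩
  · have h2 := congrArg (fun S => S.image (cmpl n)) h
    rwa [image_cmpl_cmpl hI.1, image_cmpl_cmpl hJ.1] at h2
  · exact ⟨J.image (cmpl n), consistent_of_coconsistent hkn hJ, image_cmpl_cmpl hJ.1⟩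
  · constructor
    · intro h
      exact Relation.ReflTransGen.lift (fun S : Finset (Finset ℕ) => S.image (cmpl n))
        (fun a b hab => ssistep_cmpl hkn hab) _ _ h
    · intro h
      have h2 := Relation.ReflTransGen.lift (fun S : Finset (Finset ℕ) => S.image (cmpl n))
        (fun a b hab => ssistep_cmpl' hkn hab) _ _ h
      simp only [Function.onFun] at h2
      rwa [image_cmpl_cmpl hI.1, image_cmpl_cmpl hJ.1] at h2
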